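/- Let I = (G, T, R, k, l) be an MMCU instance and let v ∈ V(G) \ T. Assume there exist k + l + 2 paths P_1, ..., P_{k+l+2} in G such that: each P_i is a simple path starting at v and ending at a terminal v_i ∈ T; any two of the paths are vertex-disjoint except for the common vertex v; and (v_i, v_j) ∉ R for all i ≠ j. Then every solution (X, F) of I satisfies v ∈ X. -/

import Mathlib

/-- A multigraph on vertex type `V` with edge type `E`: each edge has an
unordered pair of endpoints. -/
structure Multigraph (V : Type*) (E : Type*) where
  ends : E → Sym2 V

namespace Multigraph

variable {V E : Type*}

/-- The multigraph has no self-loops. -/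
def Loopless (G : Multigraph V E) : Prop := ∀ e : E, ¬ (G.ends e).IsDiag

/-- Two vertices are adjacent if some edge joins them. -/
def Adj (G : Multigraph V E) (a b : V) : Prop := ∃ e : E, G.ends e = s(a, b)

/-- The (open) neighbourhood of a vertex. -/
def nbhd (G : Multigraph V E) (v : V) : Set V := {u | G.Adj v u}

/-- The neighbourhood `N_G(D)` of a set of vertices. -/
def setNbhd (G : Multigraph V E) (D : Set V) : Set V :=
  {u | u ∉ D ∧ ∃ d ∈ D, G.Adj u d}

/-- One step along an edge of `G − (X, F)`. -/
def Step (G : Multigraph V E) (X : Set V) (F : Set E) (a b : V) : Prop :=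
  a ∉ X ∧ b ∉ X ∧ ∃ e : E, e ∉ F ∧ G.ends e = s(a, b)

/-- `u` and `v` lie in the same connected component of `G − (X, F)`. -/
def Conn (G : Multigraph V E) (X : Set V) (F : Set E) (u v : V) : Prop :=
  u ∉ X ∧ v ∉ X ∧ Relation.ReflTransGen (G.Step X F) u v

end Multigraph

/-- `R` is an equivalence relation on the set `T` (and vanishes outside `T`). -/
def IsEquivOn {V : Type*} (T : Set V) (R : V → V → Prop) : Prop :=
  (∀ u v, R u v → u ∈ T ∧ v ∈ T) ∧ (∀ u ∈ T, R u u) ∧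
    (∀ u v, R u v → R v u) ∧ (∀ u v w, R u v → R v w → R u w)

/-- `(X, F)` is a solution to the MMCU instance `(G, T, R, k, l)`. -/
def IsSolution {V E : Type*} (G : Multigraph V E) (T : Set V) (R : V → V → Prop)
    (k l : ℕ) (X : Set V) (F : Set E) : Prop :=
  X ⊆ Tᶜ ∧ X.ncard ≤ k ∧ F.ncard ≤ l ∧
    ∀ u ∈ T, ∀ v ∈ T, (G.Conn X F u v ↔ R u v)

/-- `(X, F)` is a minimal solution to the MMCU instance `(G, T, R, k, l)`. -/
def IsMinSolution {V E : Type*} (G : Multigraph V E) (T : Set V) (R : V → V → Prop)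
    (k l : ℕ) (X : Set V) (F : Set E) : Prop :=
  IsSolution G T R k l X F ∧
    ∀ X' F', IsSolution G T R k l X' F' → X' ⊆ X → F' ⊆ F → X' = X ∧ F' = F

/-- A family of `n` simple paths in `G`, each starting at `v` and ending at a
terminal, pairwise vertex-disjoint except for `v`, whose terminal endpoints lie
in pairwise different equivalence classes of `R`. -/
def IsFan {V E : Type*} (G : Multigraph V E) (T : Set V) (R : V → V → Prop)
    (n : ℕ) (v : V) : Prop :=
  ∃ (p : Fin n → List V) (tv : Fin n → V),
    (∀ i, (p i).Nodup ∧ (p i).Chain' G.Adj ∧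
      (p i).head? = some v ∧ (p i).getLast? = some (tv i) ∧ tv i ∈ T) ∧
    (∀ i j, i ≠ j → ∀ x, x ∈ p i → x ∈ p j → x = v) ∧
    (∀ i j, i ≠ j → ¬ R (tv i) (tv j))

private lemma mem_of_getLast?_aux {α : Type*} {l : List α} {a : α}
    (h : l.getLast? = some a) : a ∈ l := by
  obtain ⟨hne, rfl⟩ := List.mem_getLast?_eq_getLast (l := l) (x := a) h
  exact List.getLast_mem hne

/-- A surviving chain yields a walk in `G − (X, F)`. -/
private lemma surv {V E : Type*} (G : Multigraph V E) (X : Set V) (F : Set E) :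
    ∀ L : List V, L.Chain' G.Adj → (∀ x ∈ L, x ∉ X) →
    (∀ e ∈ F, ∀ a b : V, G.ends e = s(a, b) → ¬ ([a, b] <:+: L)) →
    ∀ a b, L.head? = some a → L.getLast? = some b →
      Relation.ReflTransGen (G.Step X F) a b := by
  intro L
  induction L with
  | nil => intro _ _ _ a b ha _; simp at ha
  | cons x L ih =>
    intro hch hX hF a b ha hb
    simp only [List.head?_cons, Option.some.injEq] at ha
    subst ha
    cases L with
    | nil =>
      simp only [List.getLast?_singleton, Option.some.injEq] at hb
      subst hb; exact Relation.ReflTransGen.refl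
    | cons y L' =>
      obtain ⟨hxy, hch2⟩ := List.isChain_cons_cons.mp hch
      obtain ⟨e, he⟩ := hxy
      have heF : e ∉ F := fun hef => hF e hef x y he ⟨[], L', rfl⟩
      have hstep : G.Step X F x y :=
        ⟨hX x (by simp), hX y (by simp), e, heF, he⟩
      have hrest : Relation.ReflTransGen (G.Step X F) y b := by
        refine ih hch2 (fun z hz => hX z (List.mem_cons_of_mem _ hz))
          (fun e' he' a' b' heq hinf => hF e' he' a' b' heq (List.infix_cons hinf))
          y b rfl ?_
        rwa [List.getLast?_cons_cons] at hb
      exact Relation.ReflTransGen.head hstep hrest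

/-- If `v ∉ T` admits `k + l + 2` simple paths to terminals of
pairwise different equivalence classes, pairwise vertex-disjoint except for `v`,
then every solution `(X, F)` of the MMCU instance satisfies `v ∈ X`. -/
theorem stmt1 {V E : Type*} [Fintype V] [Fintype E]
    (G : Multigraph V E) (hG : G.Loopless)
    (T : Set V) (R : V → V → Prop) (hR : IsEquivOn T R) (k l : ℕ)
    (v : V) (hv : v ∉ T) (hfan : IsFan G T R (k + l + 2) v) :
    ∀ X F, IsSolution G T R k l X F → v ∈ X := by
  classical
  intro X F hsol
  by_contra hvX
  obtain ⟨p, tv, hpath, hdisj, hRne⟩ := hfan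
  -- the two ways a path can be destroyed
  set A : Fin (k + l + 2) → Prop := fun i => ∃ x ∈ p i, x ∈ X with hA
  set B : Fin (k + l + 2) → Prop := fun i =>
    ∃ e ∈ F, ∃ a b : V, G.ends e = s(a, b) ∧ [a, b] <:+: p i with hB
  set SA : Finset (Fin (k + l + 2)) := Finset.univ.filter A with hSA
  set SB : Finset (Fin (k + l + 2)) := Finset.univ.filter (fun i => ¬ A i ∧ B i) with hSB
  -- bound |SA| by k
  have hSAcard : SA.card ≤ k := by
    choose g hg1 hg2 using fun (i : Fin (k + l + 2)) (hi : A i) => hi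
    have h1 : (↑SA : Set (Fin (k + l + 2))).ncard ≤ X.ncard := by
      refine Set.ncard_le_ncard_of_injOn
        (fun i => if hi : A i then g i hi else v) ?_ ?_ (Set.toFinite X)
      · intro i hi
        have hAi : A i := (Finset.mem_filter.mp hi).2
        simp only [dif_pos hAi]
        exact hg2 i hAi
      · intro i hi j hj hij
        have hAi : A i := (Finset.mem_filter.mp hi).2
        have hAj : A j := (Finset.mem_filter.mp hj).2
        simp only [dif_pos hAi, dif_pos hAj] at hij
        by_contra hne
        have hmj : g i hAi ∈ p j := hij ▸ hg1 j hAj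
        have := hdisj i j hne (g i hAi) (hg1 i hAi) hmj
        exact hvX (this ▸ hg2 i hAi)
    rw [Set.ncard_coe_finset] at h1
    exact h1.trans hsol.2.1
  -- bound |SB| by l
  have hSBcard : SB.card ≤ l := by
    rcases SB.eq_empty_or_nonempty with hemp | ⟨i0, hi0⟩
    · simp [hemp]
    choose e heF a b hab hinf using fun (i : Fin (k + l + 2)) (hi : B i) => hi
    haveI : Nonempty E := ⟨e i0 (Finset.mem_filter.mp hi0).2.2⟩
    have h1 : (↑SB : Set (Fin (k + l + 2))).ncard ≤ F.ncard := by
      refine Set.ncard_le_ncard_of_injOn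
        (fun i => if hi : B i then e i hi else Classical.arbitrary _) ?_ ?_
        (Set.toFinite F)
      · intro i hi
        have hBi : B i := (Finset.mem_filter.mp hi).2.2
        simp only [dif_pos hBi]
        exact heF i hBi
      · intro i hi j hj hij
        have hBi : B i := (Finset.mem_filter.mp hi).2.2
        have hBj : B j := (Finset.mem_filter.mp hj).2.2
        simp only [dif_pos hBi, dif_pos hBj] at hij
        by_contra hne
        have hends : s(a i hBi, b i hBi) = s(a j hBj, b j hBj) := by
          rw [← hab i hBi, ← hab j hBj, hij]
        have hai : a i hBi ∈ p i := (hinf i hBi).sublist.subset (by simp)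
        have hbi : b i hBi ∈ p i := (hinf i hBi).sublist.subset (by simp)
        have haj : a j hBj ∈ p j := (hinf j hBj).sublist.subset (by simp)
        have hbj : b j hBj ∈ p j := (hinf j hBj).sublist.subset (by simp)
        have hav : a i hBi = v := by
          rcases Sym2.eq_iff.mp hends with ⟨h1, _⟩ | ⟨h1, _⟩
          · exact hdisj i j hne _ hai (h1 ▸ haj)
          · exact hdisj i j hne _ hai (h1 ▸ hbj)
        have hbv : b i hBi = v := by
          rcases Sym2.eq_iff.mp hends with ⟨_, h2⟩ | ⟨_, h2⟩
          · exact hdisj i j hne _ hbi (h2 ▸ hbj)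
          · exact hdisj i j hne _ hbi (h2 ▸ haj)
        exact hG (e i hBi) (by rw [hab i hBi, hav, hbv]; exact Sym2.mk_isDiag_iff.mpr rfl)
    rw [Set.ncard_coe_finset] at h1
    exact h1.trans hsol.2.2.1
  -- at least two paths survive
  have hdisjAB : Disjoint SA SB := by
    rw [Finset.disjoint_left]
    intro i hi hi'
    exact (Finset.mem_filter.mp hi').2.1 (Finset.mem_filter.mp hi).2
  have hcard : (SA ∪ SB).card ≤ k + l := by
    rw [Finset.card_union_of_disjoint hdisjAB]
    omega
  have hcompl : 1 < ((SA ∪ SB)ᶜ : Finset (Fin (k + l + 2))).card := by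
    have := Finset.card_compl (SA ∪ SB)
    rw [this, Fintype.card_fin]
    omega
  obtain ⟨i, hi, j, hj, hij⟩ := Finset.one_lt_card.mp hcompl
  -- surviving paths give connections
  have key : ∀ m, m ∈ ((SA ∪ SB)ᶜ : Finset (Fin (k + l + 2))) →
      G.Conn X F v (tv m) ∧ tv m ∉ X := by
    intro m hm
    rw [Finset.mem_compl, Finset.mem_union, not_or] at hm
    have hAm : ¬ A m := fun h => hm.1 (Finset.mem_filter.mpr ⟨Finset.mem_univ _, h⟩)
    have hBm : ¬ B m := fun h =>
      hm.2 (Finset.mem_filter.mpr ⟨Finset.mem_univ _, hAm, h⟩)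
    obtain ⟨_, hch, hhd, hlast, _⟩ := hpath m
    have hXm : ∀ x ∈ p m, x ∉ X := fun x hx hxX => hAm ⟨x, hx, hxX⟩
    have hFm : ∀ e ∈ F, ∀ a b : V, G.ends e = s(a, b) → ¬ ([a, b] <:+: p m) :=
      fun e he a b hab hinf => hBm ⟨e, he, a, b, hab, hinf⟩
    have hrt := surv G X F (p m) hch hXm hFm v (tv m) hhd hlast
    have htm : tv m ∉ X := hXm _ (mem_of_getLast?_aux hlast)
    exact ⟨⟨hvX, htm, hrt⟩, htm⟩
  obtain ⟨⟨_, htiX, hrti⟩, _⟩ := key i hi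
  obtain ⟨⟨_, htjX, hrtj⟩, _⟩ := key j hj
  -- Step is symmetric
  have hsymm : Symmetric (G.Step X F) := by
    rintro a b ⟨ha, hb, e, heF, he⟩
    exact ⟨hb, ha, e, heF, by rw [he, Sym2.eq_swap]⟩
  have hconn : G.Conn X F (tv i) (tv j) :=
    ⟨htiX, htjX, ((@Relation.ReflTransGen.stdSymm _ _ ⟨fun a b h => hsymm h⟩).symm _ _ hrti).trans hrtj⟩
  have hTi : tv i ∈ T := (hpath i).2.2.2.2
  have hTj : tv j ∈ T := (hpath j).2.2.2.2
  exact hRne i j hij ((hsol.2.2.2 (tv i) hTi (tv j) hTj).mp hconn)
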